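/- arXiv:2010.00493 — 5 statements merged into one kernel-verified Lean document; each statement's English description precedes it below -/
import Mathlib

section
/- Let H be a finite-dimensional real inner product space of dimension q, A : H → ℝⁿ a linear map, u ∈ ℝⁿ, C > 0, and σ > 0. Then ∫_H exp(−(C/(2σ²))‖g‖² − (1/(2σ²))‖A g − u‖²) dg = exp(−(1/(2σ²))(C‖g_min‖² + ‖A g_min − u‖²)) · det((1/(2πσ²))(AᵀA + C I))^{−1/2}, where g_min is the unique minimizer over H of g ↦ C‖g‖² + ‖A g − u‖². -/
open MeasureTheory Real
open scoped RealInnerProductSpace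

set_option maxHeartbeats 1000000 in
theorem gaussian_tikhonov_integral
    (q n : ℕ) (A : EuclideanSpace ℝ (Fin q) →L[ℝ] EuclideanSpace ℝ (Fin n))
    (u : EuclideanSpace ℝ (Fin n)) (C σ : ℝ) (hC : 0 < C) (hσ : 0 < σ)
    (gmin : EuclideanSpace ℝ (Fin q))
    (hgmin : ∀ h : EuclideanSpace ℝ (Fin q),
      C * ‖gmin‖ ^ 2 + ‖A gmin - u‖ ^ 2 ≤ C * ‖h‖ ^ 2 + ‖A h - u‖ ^ 2) :
    ∫ g : EuclideanSpace ℝ (Fin q),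
        Real.exp (-(C / (2 * σ ^ 2)) * ‖g‖ ^ 2 - (1 / (2 * σ ^ 2)) * ‖A g - u‖ ^ 2)
      = Real.exp (-(1 / (2 * σ ^ 2)) * (C * ‖gmin‖ ^ 2 + ‖A gmin - u‖ ^ 2)) *
        (LinearMap.det
          (((1 / (2 * Real.pi * σ ^ 2)) •
              ((ContinuousLinearMap.adjoint A).comp A + C • (1 : EuclideanSpace ℝ (Fin q) →L[ℝ] EuclideanSpace ℝ (Fin q)))).toLinearMap)) ^ (-(1 : ℝ) / 2) := by
  classical
  have hσ2 : (0:ℝ) < 2 * σ ^ 2 := by positivity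
  set α : ℝ := 1 / (2 * σ ^ 2) with hαdef
  have hα : 0 < α := by positivity
  set T : EuclideanSpace ℝ (Fin q) →L[ℝ] EuclideanSpace ℝ (Fin q) :=
    (ContinuousLinearMap.adjoint A).comp A +
      C • (1 : EuclideanSpace ℝ (Fin q) →L[ℝ] EuclideanSpace ℝ (Fin q)) with hTdef
  have hTapp : ∀ g, T g = (ContinuousLinearMap.adjoint A) (A g) + C • g := by
    intro g; simp [hTdef]
  have hTinner : ∀ g h : EuclideanSpace ℝ (Fin q),
      ⟪T g, h⟫ = ⟪A g, A h⟫ + C * ⟪g, h⟫ := by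
    intro g h
    rw [hTapp, inner_add_left, ContinuousLinearMap.adjoint_inner_left, real_inner_smul_left]
  have hTsymm : (T : EuclideanSpace ℝ (Fin q) →ₗ[ℝ] EuclideanSpace ℝ (Fin q)).IsSymmetric := by
    intro g h
    show ⟪T g, h⟫ = ⟪g, T h⟫
    have e1 : ⟪g, T h⟫ = ⟪T h, g⟫ := real_inner_comm _ _
    have e2 : ⟪A h, A g⟫ = ⟪A g, A h⟫ := real_inner_comm _ _
    have e3 : ⟪h, g⟫ = ⟪g, h⟫ := real_inner_comm _ _
    rw [e1, hTinner, hTinner, e2, e3]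
  have hTquad : ∀ v, ⟪T v, v⟫ = C * ‖v‖ ^ 2 + ‖A v‖ ^ 2 := by
    intro v
    rw [hTinner, real_inner_self_eq_norm_sq, real_inner_self_eq_norm_sq]; ring
  set w : EuclideanSpace ℝ (Fin q) := T gmin - (ContinuousLinearMap.adjoint A) u with hwdef
  have hLw : ∀ v, ⟪w, v⟫ = C * ⟪gmin, v⟫ + ⟪A gmin - u, A v⟫ := by
    intro v
    rw [hwdef, inner_sub_left, hTinner, ContinuousLinearMap.adjoint_inner_left,
      inner_sub_left]
    ring
  have hexp : ∀ x v : EuclideanSpace ℝ (Fin q),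
      C * ‖x + v‖ ^ 2 + ‖A (x + v) - u‖ ^ 2
        = (C * ‖x‖ ^ 2 + ‖A x - u‖ ^ 2) + (C * ‖v‖ ^ 2 + ‖A v‖ ^ 2)
          + 2 * (C * ⟪x, v⟫ + ⟪A x - u, A v⟫) := by
    intro x v
    have h1 : ‖x + v‖ ^ 2 = ‖x‖ ^ 2 + 2 * ⟪x, v⟫ + ‖v‖ ^ 2 := norm_add_sq_real x v
    have h2 : A (x + v) - u = (A x - u) + A v := by rw [map_add]; abel
    rw [h1, h2, norm_add_sq_real (A x - u) (A v)]
    ring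
  have hw0 : w = 0 := by
    by_contra hne
    have hwpos : 0 < ‖w‖ ^ 2 := pow_pos (norm_pos_iff.mpr hne) 2
    have hK0 : 0 < C * ‖w‖ ^ 2 + ‖A w‖ ^ 2 := by positivity
    obtain ⟨K, hKdef, hK⟩ : ∃ K : ℝ, K = C * ‖w‖ ^ 2 + ‖A w‖ ^ 2 ∧ 0 < K := ⟨_, rfl, hK0⟩
    obtain ⟨t, htdef⟩ : ∃ t : ℝ, t = -(‖w‖ ^ 2) / K := ⟨_, rfl⟩
    have hineq := hgmin (gmin + t • w)
    rw [hexp gmin (t • w)] at hineq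
    have h3 : C * ‖t • w‖ ^ 2 + ‖A (t • w)‖ ^ 2 = t ^ 2 * K := by
      rw [A.map_smul, norm_smul, norm_smul, hKdef]
      simp only [Real.norm_eq_abs, mul_pow, sq_abs]
      ring
    have h4 : C * ⟪gmin, t • w⟫ + ⟪A gmin - u, A (t • w)⟫ = t * ‖w‖ ^ 2 := by
      rw [A.map_smul, real_inner_smul_right, real_inner_smul_right]
      have hww := hLw w
      rw [real_inner_self_eq_norm_sq] at hww
      linear_combination (-t) * hww
    rw [h3, h4] at hineq
    have h5 : t ^ 2 * K + 2 * (t * ‖w‖ ^ 2) = -(‖w‖ ^ 2) ^ 2 / K := by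
      rw [htdef]; field_simp; ring
    have h6 : (0:ℝ) < (‖w‖ ^ 2) ^ 2 / K := by positivity
    have h7 : -(‖w‖ ^ 2) ^ 2 / K < 0 := by rw [neg_div]; exact neg_lt_zero.mpr h6
    linarith
  have hkey : ∀ g : EuclideanSpace ℝ (Fin q),
      C * ‖g‖ ^ 2 + ‖A g - u‖ ^ 2
        = ⟪T (g - gmin), g - gmin⟫ + (C * ‖gmin‖ ^ 2 + ‖A gmin - u‖ ^ 2) := by
    intro g
    have hg : gmin + (g - gmin) = g := by abel
    have h1 := hexp gmin (g - gmin)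
    rw [hg] at h1
    have h2 : C * ⟪gmin, g - gmin⟫ + ⟪A gmin - u, A (g - gmin)⟫ = 0 := by
      rw [← hLw, hw0, inner_zero_left]
    rw [hTquad]
    linarith
  have hint : ∀ g : EuclideanSpace ℝ (Fin q),
      Real.exp (-(C / (2 * σ ^ 2)) * ‖g‖ ^ 2 - α * ‖A g - u‖ ^ 2)
        = Real.exp (-α * (C * ‖gmin‖ ^ 2 + ‖A gmin - u‖ ^ 2)) *
          Real.exp (-α * ⟪T (g - gmin), g - gmin⟫) := by
    intro g
    rw [← Real.exp_add]
    congr 1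
    have e1 : -(C / (2 * σ ^ 2)) * ‖g‖ ^ 2 - α * ‖A g - u‖ ^ 2
        = -α * (C * ‖g‖ ^ 2 + ‖A g - u‖ ^ 2) := by
      rw [hαdef]; field_simp; ring
    rw [e1, hkey g]; ring
  simp_rw [hint]
  rw [MeasureTheory.integral_const_mul]
  rw [integral_sub_right_eq_self (fun g => Real.exp (-α * ⟪T g, g⟫)) gmin]
  congr 1
  -- spectral decomposition
  have hq : Module.finrank ℝ (EuclideanSpace ℝ (Fin q)) = q := finrank_euclideanSpace_fin
  set b := hTsymm.eigenvectorBasis hq with hbdef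
  set μ := hTsymm.eigenvalues hq with hμdef
  have hdiag : ∀ v i, b.repr (T v) i = μ i * b.repr v i := fun v i =>
    hTsymm.eigenvectorBasis_apply_self_apply hq v i
  have hμpos : ∀ i, 0 < μ i := by
    intro i
    have h1 : T (b i) = (μ i : ℝ) • b i := hTsymm.apply_eigenvectorBasis hq i
    have h4 : ‖(b i : EuclideanSpace ℝ (Fin q))‖ = 1 := b.orthonormal.1 i
    have h2 : ⟪T (b i), b i⟫ = μ i := by
      rw [h1, real_inner_smul_left, real_inner_self_eq_norm_sq, h4]
      ring
    have h3 := hTquad (b i)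
    rw [h4] at h3
    nlinarith [sq_nonneg ‖A (b i)‖]
  have hform : ∀ v : EuclideanSpace ℝ (Fin q),
      ⟪T v, v⟫ = ∑ i, μ i * (b.repr v i) ^ 2 := by
    intro v
    have h1 : ⟪T v, v⟫ = ⟪b.repr (T v), b.repr v⟫ := (b.repr.inner_map_map _ _).symm
    rw [h1, PiLp.inner_apply]
    refine Finset.sum_congr rfl fun i _ => ?_
    simp [RCLike.inner_apply, hdiag]
    ring
  have hchg : (∫ g : EuclideanSpace ℝ (Fin q), Real.exp (-α * ⟪T g, g⟫))
      = ∫ x : EuclideanSpace ℝ (Fin q), Real.exp (-α * ∑ i, μ i * (x i) ^ 2) := by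
    rw [← (b.measurePreserving_repr_symm).integral_comp
      b.repr.symm.toHomeomorph.measurableEmbedding]
    congr 1
    ext x
    rw [hform]
    simp
  have hpi : (∫ x : EuclideanSpace ℝ (Fin q), Real.exp (-α * ∑ i, μ i * (x i) ^ 2))
      = ∫ y : Fin q → ℝ, Real.exp (-α * ∑ i, μ i * (y i) ^ 2) := by
    rw [← ((EuclideanSpace.volume_preserving_symm_measurableEquiv_toLp (Fin q)).symm).integral_comp
      (MeasurableEquiv.measurableEmbedding _)]
    rfl
  have hprod : (∫ y : Fin q → ℝ, Real.exp (-α * ∑ i, μ i * (y i) ^ 2))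
      = ∏ i, Real.sqrt (π / (α * μ i)) := by
    have hsplit : ∀ y : Fin q → ℝ, Real.exp (-α * ∑ i, μ i * (y i) ^ 2)
        = ∏ i, Real.exp (-(α * μ i) * (y i) ^ 2) := by
      intro y
      rw [← Real.exp_sum]
      congr 1
      rw [Finset.mul_sum]
      exact Finset.sum_congr rfl fun i _ => by ring
    simp_rw [hsplit]
    rw [MeasureTheory.volume_pi, MeasureTheory.integral_fintype_prod_eq_prod (ι := Fin q)
      (f := fun i (t : ℝ) => Real.exp (-(α * μ i) * t ^ 2))]
    exact Finset.prod_congr rfl fun i _ => integral_gaussian (α * μ i)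
  have hTdet : LinearMap.det (T : EuclideanSpace ℝ (Fin q) →ₗ[ℝ] EuclideanSpace ℝ (Fin q))
      = ∏ i, μ i := by
    rw [← LinearMap.det_toMatrix b.toBasis]
    have hmat : LinearMap.toMatrix b.toBasis b.toBasis
        (T : EuclideanSpace ℝ (Fin q) →ₗ[ℝ] EuclideanSpace ℝ (Fin q)) = Matrix.diagonal μ := by
      ext i j
      rw [LinearMap.toMatrix_apply]
      simp only [OrthonormalBasis.coe_toBasis, OrthonormalBasis.coe_toBasis_repr_apply,
        ContinuousLinearMap.coe_coe]
      rw [hdiag, OrthonormalBasis.repr_self, Matrix.diagonal_apply,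
        EuclideanSpace.single_apply]
      split_ifs with h
      · subst h; simp
      · simp [h]
    rw [hmat, Matrix.det_diagonal]
  have hdetEq : LinearMap.det (((1 / (2 * Real.pi * σ ^ 2)) • T).toLinearMap)
      = (1 / (2 * π * σ ^ 2)) ^ q * ∏ i, μ i := by
    have : ((1 / (2 * Real.pi * σ ^ 2)) • T).toLinearMap
        = (1 / (2 * Real.pi * σ ^ 2)) •
          (T : EuclideanSpace ℝ (Fin q) →ₗ[ℝ] EuclideanSpace ℝ (Fin q)) := rfl
    rw [this, LinearMap.det_smul, hTdet, hq]
  rw [hchg, hpi, hprod, hdetEq]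
  have h2πσ : (0:ℝ) < 2 * π * σ ^ 2 := by positivity
  have hpr : (1 / (2 * π * σ ^ 2) : ℝ) ^ q * ∏ i, μ i
      = ∏ i : Fin q, (μ i / (2 * π * σ ^ 2)) := by
    rw [Finset.prod_div_distrib, Finset.prod_const, Finset.card_univ, Fintype.card_fin,
      one_div, inv_pow, div_eq_mul_inv, mul_comm]
  rw [hpr, ← Real.finset_prod_rpow _ _ (fun i _ => div_nonneg (hμpos i).le (by positivity)) _]
  refine Finset.prod_congr rfl fun i _ => ?_
  have hx : (0:ℝ) < μ i / (2 * π * σ ^ 2) := by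
    have := hμpos i; positivity
  have hinv : π / (α * μ i) = (μ i / (2 * π * σ ^ 2))⁻¹ := by
    rw [hαdef]
    field_simp
  rw [hinv, Real.sqrt_eq_rpow, ← Real.rpow_neg_one (μ i / (2 * π * σ ^ 2)),
    ← Real.rpow_mul (le_of_lt hx)]
  norm_num
end

section
/- Let B ⊆ ℝ³ be compact, and for each m ∈ B let A_m : H → K be a bounded linear operator between Hilbert spaces such that m ↦ A_m is Lipschitz in operator norm with constant L and sup_{m∈B} ‖A_m‖ ≤ M. Fix ũ ∈ K and C > 0, and define f_C(m) = min_{g∈H} (‖A_m g − ũ‖² + C‖g‖²). Then f_C is Lipschitz continuous on B and achieves its minimum on B. -/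
open Filter

theorem fC_lipschitz_and_attains_min
    {H K : Type*} [NormedAddCommGroup H] [InnerProductSpace ℝ H] [CompleteSpace H]
    [NormedAddCommGroup K] [InnerProductSpace ℝ K] [CompleteSpace K]
    (B : Set (EuclideanSpace ℝ (Fin 3))) (hB : IsCompact B) (hBne : B.Nonempty)
    (A : EuclideanSpace ℝ (Fin 3) → (H →L[ℝ] K))
    (L M : ℝ)
    (hLip : ∀ m ∈ B, ∀ m' ∈ B, ‖A m - A m'‖ ≤ L * dist m m')
    (hbdd : ∀ m ∈ B, ‖A m‖ ≤ M)
    (util : K) (C : ℝ) (hC : 0 < C)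
    (f : EuclideanSpace ℝ (Fin 3) → ℝ)
    (hf : ∀ m ∈ B, ∀ g : H,
      (f m ≤ ‖A m g - util‖ ^ 2 + C * ‖g‖ ^ 2) ∧
      ∃ gmin : H, f m = ‖A m gmin - util‖ ^ 2 + C * ‖gmin‖ ^ 2) :
    (∃ L' : ℝ, 0 ≤ L' ∧ ∀ m ∈ B, ∀ m' ∈ B, |f m - f m'| ≤ L' * dist m m') ∧
    ∃ m₀ ∈ B, ∀ m ∈ B, f m₀ ≤ f m := by
  set R : ℝ := ‖util‖ / Real.sqrt C with hR
  have hRnn : 0 ≤ R := div_nonneg (norm_nonneg _) (Real.sqrt_nonneg _)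
  set K0 : ℝ := (max L 0) * (2 * (max M 0) * R + 2 * ‖util‖) * R with hK0
  have hK0nn : 0 ≤ K0 := by
    apply mul_nonneg
    apply mul_nonneg (le_max_right L 0)
    · positivity
    · exact hRnn
  -- upper bound for f
  have hfub : ∀ m ∈ B, f m ≤ ‖util‖ ^ 2 := by
    intro m hm
    have h := (hf m hm 0).1
    simpa using h
  have key : ∀ m ∈ B, ∀ m' ∈ B, f m - f m' ≤ K0 * dist m m' := by
    intro m hm m' hm'
    obtain ⟨g, hg⟩ := (hf m' hm' 0).2
    have hx2 : (0:ℝ) ≤ ‖A m' g - util‖ ^ 2 := by positivity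
    have hgR : ‖g‖ ≤ R := by
      have h1 : C * ‖g‖ ^ 2 ≤ ‖util‖ ^ 2 := by nlinarith [hfub m' hm']
      have h2 : ‖g‖ ^ 2 ≤ R ^ 2 := by
        rw [hR, div_pow, Real.sq_sqrt hC.le, le_div_iff₀ hC]
        linarith
      calc ‖g‖ = Real.sqrt (‖g‖ ^ 2) := (Real.sqrt_sq (norm_nonneg g)).symm
        _ ≤ Real.sqrt (R ^ 2) := Real.sqrt_le_sqrt h2
        _ = R := Real.sqrt_sq hRnn
    have hdnn : (0:ℝ) ≤ dist m m' := dist_nonneg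
    have hLd : 0 ≤ L * dist m m' := le_trans (norm_nonneg _) (hLip m hm m' hm')
    set x := A m g - util with hxdef
    set y := A m' g - util with hydef
    have hAd : ‖x‖ - ‖y‖ ≤ L * dist m m' * ‖g‖ := by
      have h0 : ‖x‖ - ‖y‖ ≤ ‖x - y‖ := norm_sub_norm_le x y
      have h1 : x - y = (A m - A m') g := by
        simp [hxdef, hydef]
      have h2 : ‖(A m - A m') g‖ ≤ ‖A m - A m'‖ * ‖g‖ := (A m - A m').le_opNorm g
      have h3 : ‖A m - A m'‖ * ‖g‖ ≤ (L * dist m m') * ‖g‖ :=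
        mul_le_mul_of_nonneg_right (hLip m hm m' hm') (norm_nonneg g)
      rw [h1] at h0
      linarith
    have hxb : ‖x‖ ≤ (max M 0) * R + ‖util‖ := by
      have : ‖A m g‖ ≤ (max M 0) * R := by
        calc ‖A m g‖ ≤ ‖A m‖ * ‖g‖ := (A m).le_opNorm g
          _ ≤ (max M 0) * R := by
              apply mul_le_mul (le_trans (hbdd m hm) (le_max_left M 0)) hgR
                (norm_nonneg g) (le_max_right M 0)
      calc ‖x‖ ≤ ‖A m g‖ + ‖util‖ := norm_sub_le _ _
        _ ≤ (max M 0) * R + ‖util‖ := by linarith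
    have hyb : ‖y‖ ≤ (max M 0) * R + ‖util‖ := by
      have : ‖A m' g‖ ≤ (max M 0) * R := by
        calc ‖A m' g‖ ≤ ‖A m'‖ * ‖g‖ := (A m').le_opNorm g
          _ ≤ (max M 0) * R := by
              apply mul_le_mul (le_trans (hbdd m' hm') (le_max_left M 0)) hgR
                (norm_nonneg g) (le_max_right M 0)
      calc ‖y‖ ≤ ‖A m' g‖ + ‖util‖ := norm_sub_le _ _
        _ ≤ (max M 0) * R + ‖util‖ := by linarith
    have hle : f m ≤ ‖x‖ ^ 2 + C * ‖g‖ ^ 2 := (hf m hm g).1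
    -- ‖x‖² - ‖y‖² ≤ (‖x‖+‖y‖)(L d ‖g‖)
    have hsum : (0:ℝ) ≤ ‖x‖ + ‖y‖ := add_nonneg (norm_nonneg x) (norm_nonneg y)
    have h3 : ‖x‖ ^ 2 - ‖y‖ ^ 2 ≤ (‖x‖ + ‖y‖) * (L * dist m m' * ‖g‖) := by
      nlinarith [mul_le_mul_of_nonneg_left hAd hsum]
    have hLg : L * dist m m' * ‖g‖ ≤ (max L 0) * dist m m' * R := by
      have h1 : L * dist m m' * ‖g‖ ≤ L * dist m m' * R :=
        mul_le_mul_of_nonneg_left hgR hLd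
      have h2 : L * dist m m' * R ≤ (max L 0) * dist m m' * R := by
        apply mul_le_mul_of_nonneg_right _ hRnn
        exact mul_le_mul_of_nonneg_right (le_max_left L 0) hdnn
      linarith
    have hLgnn : 0 ≤ L * dist m m' * ‖g‖ := mul_nonneg hLd (norm_nonneg g)
    have h4 : (‖x‖ + ‖y‖) * (L * dist m m' * ‖g‖) ≤
        (2 * (max M 0) * R + 2 * ‖util‖) * ((max L 0) * dist m m' * R) := by
      apply mul_le_mul _ hLg hLgnn (by positivity)
      linarith
    have h5 : (2 * (max M 0) * R + 2 * ‖util‖) * ((max L 0) * dist m m' * R)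
        = K0 * dist m m' := by rw [hK0]; ring
    nlinarith [hg]
  have hlipOn : LipschitzOnWith (Real.toNNReal K0) f B := by
    rw [lipschitzOnWith_iff_dist_le_mul]
    intro a ha b hb
    rw [Real.dist_eq, Real.coe_toNNReal K0 hK0nn, abs_sub_le_iff]
    refine ⟨key a ha b hb, ?_⟩
    rw [dist_comm]
    exact key b hb a ha
  constructor
  · refine ⟨K0, hK0nn, fun m hm m' hm' => ?_⟩
    rw [abs_sub_le_iff]
    refine ⟨key m hm m' hm', ?_⟩
    rw [dist_comm] at *
    exact key m' hm' m hm
  · obtain ⟨m₀, hm₀, hmin⟩ := hB.exists_isMinOn hBne hlipOn.continuousOn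
    exact ⟨m₀, hm₀, fun m hm => hmin hm⟩
end

section
/- Let f_C : B → ℝ be continuous on a compact set B ⊆ ℝ³, with a unique global minimizer m̃, and let 0 < γ₁ < γ₂ be such that f_C ≤ γ₁ on a closed ball B̄(m̃, η′) ∩ B of positive measure and f_C ≥ γ₂ on B \ B(m̃, η). For each N define the probability density ρ_N(m) ∝ f_C(m)^{−3N/2} on B. Then the ρ_N-probability of the set B \ B(m̃, η) is O((γ₁/γ₂)^{3N/2}), and in particular converges to 0 as N → ∞. -/
open MeasureTheory Filter

theorem posterior_concentration_fixed_C
    (B : Set (EuclideanSpace ℝ (Fin 3))) (hB : IsCompact B)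
    (f : EuclideanSpace ℝ (Fin 3) → ℝ) (hfcont : ContinuousOn f B)
    (hfpos : ∀ m ∈ B, 0 < f m)
    (mtil : EuclideanSpace ℝ (Fin 3)) (hmtil : mtil ∈ B)
    (hmin : ∀ m ∈ B, m ≠ mtil → f mtil < f m)
    (η' η γ₁ γ₂ : ℝ) (hη' : 0 < η') (hηη : η' < η)
    (hγ₁ : 0 < γ₁) (hγ : γ₁ < γ₂)
    (hupper : ∀ m ∈ Metric.closedBall mtil η' ∩ B, f m ≤ γ₁)
    (hgoodpos : 0 < volume (Metric.closedBall mtil η' ∩ B))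
    (hlower : ∀ m ∈ B \ Metric.ball mtil η, γ₂ ≤ f m)
    (ρ : ℕ → EuclideanSpace ℝ (Fin 3) → ℝ)
    (hρ : ∀ N, ∀ m ∈ B, ρ N m =
      f m ^ (-(3 * (N : ℝ) / 2)) / ∫ m' in B, f m' ^ (-(3 * (N : ℝ) / 2))) :
    (∃ K : ℝ, ∀ N : ℕ,
      ∫ m in B \ Metric.ball mtil η, ρ N m ≤ K * (γ₁ / γ₂) ^ (3 * (N : ℝ) / 2)) ∧
    Tendsto (fun N : ℕ => ∫ m in B \ Metric.ball mtil η, ρ N m) atTop (nhds 0) := by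
  classical
  set S := B \ Metric.ball mtil η with hSdef
  set G := Metric.closedBall mtil η' ∩ B with hGdef
  have hBmeas : MeasurableSet B := hB.isClosed.measurableSet
  have hSmeas : MeasurableSet S := hBmeas.diff Metric.isOpen_ball.measurableSet
  have hGmeas : MeasurableSet G := Metric.isClosed_closedBall.measurableSet.inter hBmeas
  have hSsub : S ⊆ B := Set.diff_subset
  have hGsub : G ⊆ B := Set.inter_subset_right
  have hBfin : volume B < ⊤ := hB.measure_lt_top
  have hSfin : volume S < ⊤ := lt_of_le_of_lt (measure_mono hSsub) hBfin
  have hGfin : volume G < ⊤ := lt_of_le_of_lt (measure_mono hGsub) hBfin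
  have hGpos : 0 < (volume G).toReal := ENNReal.toReal_pos hgoodpos.ne' hGfin.ne
  have hγ₂ : 0 < γ₂ := hγ₁.trans hγ
  set r : ℝ := γ₁ / γ₂ with hr
  have hr0 : 0 < r := div_pos hγ₁ hγ₂
  have hr1 : r < 1 := (div_lt_one hγ₂).2 hγ
  set K : ℝ := (volume S).toReal / (volume G).toReal with hK
  have key : ∀ N : ℕ, (0 ≤ ∫ m in S, ρ N m) ∧
      ∫ m in S, ρ N m ≤ K * r ^ (3 * (N : ℝ) / 2) := by
    intro N
    set x : ℝ := -(3 * (N : ℝ) / 2) with hx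
    have hxle : x ≤ 0 := by
      have : (0:ℝ) ≤ 3 * (N : ℝ) / 2 := by positivity
      rw [hx]; linarith
    set g : EuclideanSpace ℝ (Fin 3) → ℝ := fun m => f m ^ x with hg
    have hgcont : ContinuousOn g B :=
      hfcont.rpow_const (fun m hm => Or.inl (hfpos m hm).ne')
    have hgint : IntegrableOn g B := hgcont.integrableOn_compact hB
    have hgnn : ∀ m ∈ B, 0 ≤ g m := fun m hm =>
      Real.rpow_nonneg (hfpos m hm).le x
    -- lower bound for the denominator
    have hlow1 : γ₁ ^ x * (volume G).toReal ≤ ∫ m in G, g m := by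
      refine setIntegral_ge_of_const_le_real hGmeas hGfin.ne (fun m hm => ?_)
        (hgint.mono_set hGsub)
      exact Real.rpow_le_rpow_of_nonpos (hfpos m (hGsub hm)) (hupper m hm) hxle
    have hlow2 : ∫ m in G, g m ≤ ∫ m in B, g m :=
      setIntegral_mono_set hgint (ae_restrict_of_forall_mem hBmeas hgnn)
        (HasSubset.Subset.eventuallyLE hGsub)
    have hIB : 0 < ∫ m in B, g m :=
      lt_of_lt_of_le (by positivity) (hlow1.trans hlow2)
    -- upper bound for the numerator
    have hup : ∫ m in S, g m ≤ γ₂ ^ x * (volume S).toReal := by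
      have hnorm : ‖∫ m in S, g m‖ ≤ γ₂ ^ x * (volume S).toReal := by
        refine norm_setIntegral_le_of_norm_le_const hSfin (fun m hm => ?_)
        rw [Real.norm_of_nonneg (hgnn m (hSsub hm))]
        exact Real.rpow_le_rpow_of_nonpos hγ₂ (hlower m hm) hxle
      exact (le_abs_self _).trans hnorm
    -- rewrite the integral of ρ
    have hrw : ∫ m in S, ρ N m = (∫ m in S, g m) / ∫ m in B, g m := by
      rw [← integral_div]
      exact setIntegral_congr_fun hSmeas (fun m hm => hρ N m (hSsub hm))
    have hnum_nn : 0 ≤ ∫ m in S, g m :=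
      setIntegral_nonneg hSmeas (fun m hm => hgnn m (hSsub hm))
    constructor
    · rw [hrw]; positivity
    · rw [hrw]
      have hdivle : (∫ m in S, g m) / ∫ m in B, g m ≤
          (γ₂ ^ x * (volume S).toReal) / (γ₁ ^ x * (volume G).toReal) := by
        refine div_le_div₀ (by positivity) hup (by positivity) (hlow1.trans hlow2)
      refine hdivle.trans (le_of_eq ?_)
      rw [hx, Real.rpow_neg hγ₂.le, Real.rpow_neg hγ₁.le, hr,
        Real.div_rpow hγ₁.le hγ₂.le, hK]
      have h1 : (0:ℝ) < γ₁ ^ (3 * (N : ℝ) / 2) := Real.rpow_pos_of_pos hγ₁ _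
      have h2 : (0:ℝ) < γ₂ ^ (3 * (N : ℝ) / 2) := Real.rpow_pos_of_pos hγ₂ _
      set a := γ₁ ^ (3 * (N : ℝ) / 2) with ha
      set b := γ₂ ^ (3 * (N : ℝ) / 2) with hb
      field_simp
  constructor
  · exact ⟨K, fun N => (key N).2⟩
  · have hq0 : 0 ≤ r ^ ((3:ℝ)/2) := Real.rpow_nonneg hr0.le _
    have hq1 : r ^ ((3:ℝ)/2) < 1 := Real.rpow_lt_one hr0.le hr1 (by norm_num)
    have hpow : Tendsto (fun N : ℕ => K * r ^ (3 * (N : ℝ) / 2)) atTop (nhds 0) := by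
      have heq : ∀ N : ℕ, K * r ^ (3 * (N : ℝ) / 2) = K * (r ^ ((3:ℝ)/2)) ^ N := by
        intro N
        rw [← Real.rpow_natCast (r ^ ((3:ℝ)/2)) N, ← Real.rpow_mul hr0.le]
        ring_nf
      simp only [heq]
      have := (tendsto_pow_atTop_nhds_zero_of_lt_one hq0 hq1).const_mul K
      simpa using this
    exact squeeze_zero (fun N => (key N).1) (fun N => (key N).2) hpow
end

section
/- Let V, R be compact subsets of Euclidean space with finite Lebesgue measure and let H : V × R → ℝ be continuous. Let A : L²(R) → L²(V) be the integral operator with kernel H. Then A A* : L²(V) → L²(V) is an integral operator with continuous kernel K(x, x′) = ∫_R H(x, y) H(x′, y) dy, it is trace class, and tr(A A*) = ∫_V K(x, x) dx = ∫_V ∫_R H(x, y)² dy dx. -/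
open MeasureTheory ENNReal NNReal

local notation "⟪" x ", " y "⟫" => @inner ℝ _ _ x y

/-- A set of points pairwise at distance ≥ 1 in a separable metric space is countable. -/
lemma countable_of_hilbertBasis {ι : Type} {E : Type*} [NormedAddCommGroup E]
    [InnerProductSpace ℝ E] [TopologicalSpace.SeparableSpace E]
    (b : HilbertBasis ι ℝ E) : Countable ι := by
  have hb := b.orthonormal
  have hdist : ∀ i j : ι, i ≠ j → (1 : ℝ) ≤ dist (b i) (b j) := by
    intro i j hij
    have h1 : ‖b i - b j‖ ^ 2 = 2 := by
      rw [norm_sub_sq_real, hb.1 i, hb.1 j, hb.2 hij]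
      norm_num
    have h0 : (0:ℝ) ≤ ‖b i - b j‖ := norm_nonneg _
    rw [dist_eq_norm]
    nlinarith
  have hdisj : (Set.univ : Set ι).PairwiseDisjoint
      (fun i => Metric.ball (b i) (1/2)) := by
    intro i _ j _ hij
    exact Metric.ball_disjoint_ball (by linarith [hdist i j hij])
  have hcnt := hdisj.countable_of_isOpen (fun i _ => Metric.isOpen_ball)
    (fun i _ => ⟨b i, by simp⟩)
  exact Set.countable_univ_iff.mp hcnt

lemma memLp_two_of_continuous {S : Set (ℝ × ℝ)} (hS : IsCompact S)
    {f : (ℝ × ℝ) → ℝ} (hf : Continuous f) :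
    MemLp f 2 (volume.restrict S) := by
  haveI : IsFiniteMeasure (volume.restrict S) :=
    ⟨by simpa [Measure.restrict_apply_univ] using hS.measure_lt_top⟩
  obtain ⟨C, hC⟩ := hS.exists_bound_of_continuousOn hf.continuousOn
  refine MemLp.of_bound (hf.aestronglyMeasurable) C ?_
  filter_upwards [ae_restrict_mem hS.measurableSet] with y hy using hC y hy

lemma parseval_sq {E : Type*} [NormedAddCommGroup E] [InnerProductSpace ℝ E]
    [CompleteSpace E] {κ : Type*} (d : HilbertBasis κ ℝ E) (x : E) :
    Summable (fun k => (⟪x, d k⟫ : ℝ) ^ 2) ∧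
      (∑' k, (⟪x, d k⟫ : ℝ) ^ 2) = ‖x‖ ^ 2 := by
  have h1 := d.summable_inner_mul_inner x x
  have h2 := d.tsum_inner_mul_inner x x
  have key : ∀ k, (⟪x, d k⟫ : ℝ) * ⟪d k, x⟫ = (⟪x, d k⟫ : ℝ) ^ 2 := fun k => by
    rw [real_inner_comm (d k) x]; ring
  constructor
  · exact h1.congr key
  · rw [← tsum_congr key, h2, real_inner_self_eq_norm_sq]

lemma ofReal_parseval_sq {E : Type*} [NormedAddCommGroup E] [InnerProductSpace ℝ E]
    [CompleteSpace E] {κ : Type*} (d : HilbertBasis κ ℝ E) (x : E) :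
    ENNReal.ofReal (‖x‖ ^ 2) = ∑' k, ENNReal.ofReal ((⟪x, d k⟫ : ℝ) ^ 2) := by
  rw [← (parseval_sq d x).2,
    ENNReal.ofReal_tsum_of_nonneg (fun k => sq_nonneg _) (parseval_sq d x).1]

set_option maxHeartbeats 1000000 in
theorem AAstar_integral_kernel_trace
    (V R : Set (ℝ × ℝ)) (hV : IsCompact V) (hR : IsCompact R)
    (H : (ℝ × ℝ) → (ℝ × ℝ) → ℝ)
    (hH : Continuous fun p : (ℝ × ℝ) × (ℝ × ℝ) => H p.1 p.2)
    (A : Lp ℝ 2 (volume.restrict R) →L[ℝ] Lp ℝ 2 (volume.restrict V))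
    (hA : ∀ g : Lp ℝ 2 (volume.restrict R),
      (A g : (ℝ × ℝ) → ℝ) =ᵐ[volume.restrict V] fun x => ∫ y in R, H x y * g y) :
    (Continuous fun p : (ℝ × ℝ) × (ℝ × ℝ) => ∫ y in R, H p.1 y * H p.2 y) ∧
    (∀ u : Lp ℝ 2 (volume.restrict V),
      ((A.comp (ContinuousLinearMap.adjoint A)) u : (ℝ × ℝ) → ℝ)
        =ᵐ[volume.restrict V]
          fun x => ∫ x' in V, (∫ y in R, H x y * H x' y) * u x') ∧
    (∀ (ι : Type) (b : HilbertBasis ι ℝ (Lp ℝ 2 (volume.restrict V))),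
      Summable (fun i =>
        inner ℝ ((A.comp (ContinuousLinearMap.adjoint A)) (b i)) (b i) : ι → ℝ) ∧
      (∑' i, (inner ℝ ((A.comp (ContinuousLinearMap.adjoint A)) (b i)) (b i) : ℝ))
        = ∫ x in V, ∫ y in R, H x y * H x y ∧
      (∫ x in V, ∫ y in R, H x y * H x y) = ∫ x in V, ∫ y in R, (H x y) ^ 2) := by
  haveI : IsFiniteMeasure (volume.restrict R) :=
    ⟨by simpa [Measure.restrict_apply_univ] using hR.measure_lt_top⟩
  haveI : IsFiniteMeasure (volume.restrict V) :=
    ⟨by simpa [Measure.restrict_apply_univ] using hV.measure_lt_top⟩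
  haveI : Fact ((2 : ℝ≥0∞) ≠ ∞) := ⟨by norm_num⟩
  -- continuity of H in each variable
  have hHx : ∀ x, Continuous (H x) := fun x =>
    hH.comp (Continuous.prodMk_right x)
  -- the kernel sections as L² elements
  have hmem : ∀ x : ℝ × ℝ, MemLp (H x) 2 (volume.restrict R) :=
    fun x => memLp_two_of_continuous hR (hHx x)
  set h : (ℝ × ℝ) → Lp ℝ 2 (volume.restrict R) := fun x => (hmem x).toLp (H x) with hh
  have hcoe : ∀ x, (h x : (ℝ × ℝ) → ℝ) =ᵐ[volume.restrict R] H x :=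
    fun x => (hmem x).coeFn_toLp
  -- inner products against kernel sections
  have lemA : ∀ (x : ℝ × ℝ) (g : Lp ℝ 2 (volume.restrict R)),
      (⟪h x, g⟫ : ℝ) = ∫ y in R, H x y * g y := by
    intro x g
    rw [L2.inner_def]
    refine integral_congr_ae ?_
    filter_upwards [hcoe x] with y hy
    simp [hy, RCLike.inner_apply, mul_comm]
  -- Part 1: continuity of the kernel K
  have part1 : Continuous fun p : (ℝ × ℝ) × (ℝ × ℝ) => ∫ y in R, H p.1 y * H p.2 y := by
    rw [continuous_iff_continuousAt]
    intro p₀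
    have hcomp : IsCompact ((Metric.closedBall p₀ 1) ×ˢ R) :=
      (isCompact_closedBall _ _).prod hR
    have hcont : Continuous (fun q : ((ℝ × ℝ) × (ℝ × ℝ)) × (ℝ × ℝ) =>
        H q.1.1 q.2 * H q.1.2 q.2) := by fun_prop
    obtain ⟨C, hC⟩ := hcomp.exists_bound_of_continuousOn hcont.continuousOn
    refine continuousAt_of_dominated (bound := fun _ => C) ?_ ?_ (integrable_const C) ?_
    · filter_upwards with p
      exact (((hHx p.1).mul (hHx p.2)).aestronglyMeasurable)
    · filter_upwards [Metric.closedBall_mem_nhds p₀ one_pos] with p hp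
      filter_upwards [ae_restrict_mem hR.measurableSet] with y hy
      exact hC ((p, y)) ⟨hp, hy⟩
    · filter_upwards with y
      exact Continuous.continuousAt (by fun_prop)
  -- inner product formula in L²(V)
  have innerL2V : ∀ f g : Lp ℝ 2 (volume.restrict V),
      (⟪f, g⟫ : ℝ) = ∫ x in V, f x * g x := by
    intro f g
    rw [L2.inner_def]
    simp [RCLike.inner_apply, mul_comm]
  -- kernel representation of A applied to kernel sections
  have lemAc : ∀ x : ℝ × ℝ, (A (h x) : (ℝ × ℝ) → ℝ) =ᵐ[volume.restrict V]
      fun x' => ∫ y in R, H x y * H x' y := by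
    intro x
    refine (hA (h x)).trans (Filter.Eventually.of_forall fun x' => ?_)
    refine integral_congr_ae ?_
    filter_upwards [hcoe x] with y hy
    rw [hy, mul_comm]
  -- Part 2
  have part2 : ∀ u : Lp ℝ 2 (volume.restrict V),
      ((A.comp (ContinuousLinearMap.adjoint A)) u : (ℝ × ℝ) → ℝ)
        =ᵐ[volume.restrict V]
          fun x => ∫ x' in V, (∫ y in R, H x y * H x' y) * u x' := by
    intro u
    have h1 := hA ((ContinuousLinearMap.adjoint A) u)
    rw [ContinuousLinearMap.comp_apply]
    refine h1.trans (Filter.Eventually.of_forall fun x => ?_)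
    calc (∫ y in R, H x y * ((ContinuousLinearMap.adjoint A) u) y)
        = ⟪h x, (ContinuousLinearMap.adjoint A) u⟫ := (lemA x _).symm
      _ = ⟪A (h x), u⟫ := ContinuousLinearMap.adjoint_inner_right A (h x) u
      _ = ∫ x' in V, (A (h x) : (ℝ × ℝ) → ℝ) x' * u x' := innerL2V _ _
      _ = ∫ x' in V, (∫ y in R, H x y * H x' y) * u x' := by
          refine integral_congr_ae ?_
          filter_upwards [lemAc x] with x' hx'
          rw [hx']
  refine ⟨part1, part2, ?_⟩
  -- Part 3
  intro ι b
  haveI : Countable ι := countable_of_hilbertBasis b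
  obtain ⟨w, c, -⟩ := exists_hilbertBasis ℝ (Lp ℝ 2 (volume.restrict R))
  haveI : Countable w := countable_of_hilbertBasis c
  set B := ContinuousLinearMap.adjoint A with hB
  have traceEq : ∀ i, (inner ℝ ((A.comp (ContinuousLinearMap.adjoint A)) (b i)) (b i) : ℝ)
      = ‖B (b i)‖ ^ 2 := by
    intro i
    rw [ContinuousLinearMap.comp_apply, ← ContinuousLinearMap.adjoint_inner_right A,
      real_inner_self_eq_norm_sq]
  -- the diagonal kernel
  set G : (ℝ × ℝ) → ℝ := fun x => ∫ y in R, H x y * H x y with hG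
  have Gnn : ∀ x, 0 ≤ G x := fun x => integral_nonneg fun y => mul_self_nonneg _
  have Gcont : Continuous G := part1.comp (continuous_id.prodMk continuous_id)
  have Gint : Integrable G (volume.restrict V) :=
    Gcont.continuousOn.integrableOn_compact hV
  -- ENNReal-valued computation
  set e : ι → ℝ≥0∞ := fun i => ENNReal.ofReal (‖B (b i)‖ ^ 2) with he
  have step1 : ∀ i, e i = ∑' j : w, ENNReal.ofReal ((⟪b i, A (c j)⟫ : ℝ) ^ 2) := by
    intro i
    simp only [he]
    rw [ofReal_parseval_sq c (B (b i))]
    refine tsum_congr fun j => ?_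
    rw [hB, ContinuousLinearMap.adjoint_inner_left]
  have normAcj : ∀ j : w, ‖A (c j)‖ ^ 2 = ∫ x in V, (⟪h x, c j⟫ : ℝ) ^ 2 := by
    intro j
    rw [← real_inner_self_eq_norm_sq, innerL2V]
    refine integral_congr_ae ?_
    filter_upwards [hA (c j)] with x hx
    rw [hx, ← lemA x (c j)]
    ring
  have aeEq : ∀ j : w, (fun x => (⟪h x, c j⟫ : ℝ)) =ᵐ[volume.restrict V]
      (A (c j) : (ℝ × ℝ) → ℝ) := by
    intro j
    filter_upwards [hA (c j)] with x hx
    rw [hx, ← lemA x (c j)]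
  have measj : ∀ j : w, AEMeasurable
      (fun x => ENNReal.ofReal ((⟪h x, c j⟫ : ℝ) ^ 2)) (volume.restrict V) := by
    intro j
    have h1 : AEStronglyMeasurable (fun x => (⟪h x, c j⟫ : ℝ)) (volume.restrict V) :=
      (Lp.aestronglyMeasurable (A (c j))).congr (aeEq j).symm
    exact ENNReal.measurable_ofReal.comp_aemeasurable
      ((h1.aemeasurable.pow aemeasurable_const))
  have intj : ∀ j : w, Integrable (fun x => (⟪h x, c j⟫ : ℝ) ^ 2) (volume.restrict V) := by
    intro j
    have h1 : Integrable (fun x => (A (c j) : (ℝ × ℝ) → ℝ) x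
        * (A (c j) : (ℝ × ℝ) → ℝ) x) (volume.restrict V) := by
      have := L2.integrable_inner (𝕜 := ℝ) (A (c j)) (A (c j))
      simpa [RCLike.inner_apply, pow_two] using this
    refine (h1.congr ?_)
    filter_upwards [aeEq j] with x hx
    rw [hx]; ring
  have step2 : (∑' i, e i) = ENNReal.ofReal (∫ x in V, G x) := by
    calc (∑' i, e i) = ∑' i, ∑' j : w, ENNReal.ofReal ((⟪b i, A (c j)⟫ : ℝ) ^ 2) :=
          tsum_congr step1
      _ = ∑' j : w, ∑' i, ENNReal.ofReal ((⟪b i, A (c j)⟫ : ℝ) ^ 2) := ENNReal.tsum_comm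
      _ = ∑' j : w, ENNReal.ofReal (‖A (c j)‖ ^ 2) := by
          refine tsum_congr fun j => ?_
          rw [ofReal_parseval_sq b (A (c j))]
          exact tsum_congr fun i => by rw [real_inner_comm]
      _ = ∑' j : w, ∫⁻ x in V, ENNReal.ofReal ((⟪h x, c j⟫ : ℝ) ^ 2) := by
          refine tsum_congr fun j => ?_
          rw [normAcj j, ofReal_integral_eq_lintegral_ofReal (intj j)
            (Filter.Eventually.of_forall fun x => sq_nonneg _)]
      _ = ∫⁻ x in V, ∑' j : w, ENNReal.ofReal ((⟪h x, c j⟫ : ℝ) ^ 2) :=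
          (lintegral_tsum measj).symm
      _ = ∫⁻ x in V, ENNReal.ofReal (G x) := by
          refine lintegral_congr fun x => ?_
          rw [← ofReal_parseval_sq c (h x)]
          congr 1
          rw [← real_inner_self_eq_norm_sq, lemA x (h x), hG]
          refine integral_congr_ae ?_
          filter_upwards [hcoe x] with y hy
          rw [hy]
      _ = ENNReal.ofReal (∫ x in V, G x) :=
          (ofReal_integral_eq_lintegral_ofReal Gint
            (Filter.Eventually.of_forall Gnn)).symm
  -- summability
  set f : ι → ℝ≥0 := fun i => ‖B (b i)‖₊ ^ 2 with hf
  have ecoe : ∀ i, (f i : ℝ≥0∞) = e i := by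
    intro i
    simp only [hf, he, ENNReal.coe_pow, ← enorm_eq_nnnorm, ← ofReal_norm]
    rw [← ENNReal.ofReal_pow (norm_nonneg _)]
  have hne : (∑' i, (f i : ℝ≥0∞)) ≠ ⊤ := by
    rw [tsum_congr ecoe, step2]; exact ENNReal.ofReal_ne_top
  have hsum : Summable fun i => (f i : ℝ) :=
    NNReal.summable_coe.mpr (ENNReal.tsum_coe_ne_top_iff_summable.mp hne)
  have fcoe : ∀ i, (f i : ℝ) = ‖B (b i)‖ ^ 2 := by
    intro i; simp [hf, coe_nnnorm]
  have hsum2 : Summable fun i => ‖B (b i)‖ ^ 2 := hsum.congr fcoe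
  have tsumval : (∑' i, ‖B (b i)‖ ^ 2) = ∫ x in V, G x := by
    have h1 : ENNReal.ofReal (∑' i, ‖B (b i)‖ ^ 2) = ENNReal.ofReal (∫ x in V, G x) := by
      rw [ENNReal.ofReal_tsum_of_nonneg (fun i => sq_nonneg _) hsum2, ← step2]
    exact (ENNReal.ofReal_eq_ofReal_iff (tsum_nonneg fun i => sq_nonneg _)
      (integral_nonneg Gnn)).mp h1
  refine ⟨hsum2.congr fun i => (traceEq i).symm, ?_, ?_⟩
  · rw [tsum_congr traceEq, tsumval]
  · simp_rw [pow_two]; rfl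
end

section
/- Let B ⊆ ℝ³ be compact with positive Lebesgue measure, and suppose ρ_N : B × [C₀, C₁] → ℝ are probability densities of the form ρ_N(m, C) = I_N · D_N(m, C)^{−1/2} · G_N(m, C)^{−3M_N/2}, where 1 ≤ D_N(m, C) ≤ D̄ uniformly, G_N(m, C) ≤ γ₁ for all (m, C) with m ∈ B̄(m̃, η′) ∩ B, and G_N(m, C) ≥ γ₂ > γ₁ for all m ∈ B \ B(m̃, η), with I_N the normalizing constant. Then the probability under ρ_N of the event {m ∈ B \ B(m̃, η)} is bounded by a constant times (γ₁/γ₂)^{3M_N/2}, hence tends to 0 as M_N → ∞. -/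
open MeasureTheory Filter

theorem posterior_concentration_joint
    (B : Set (EuclideanSpace ℝ (Fin 3))) (hB : IsCompact B) (hBpos : 0 < volume B)
    (C₀ C₁ : ℝ) (hC₀ : 0 < C₀) (hC : C₀ < C₁)
    (mtil : EuclideanSpace ℝ (Fin 3)) (hmtil : mtil ∈ B)
    (η' η : ℝ) (hη' : 0 < η') (hηη : η' < η)
    (γ₁ γ₂ Dbar : ℝ) (hγ₁ : 0 < γ₁) (hγ : γ₁ < γ₂) (hDbar : 1 ≤ Dbar)
    (M : ℕ → ℕ) (hM : Tendsto M atTop atTop)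
    (D G : ℕ → EuclideanSpace ℝ (Fin 3) × ℝ → ℝ)
    (hDmeas : ∀ N, Measurable (D N)) (hGmeas : ∀ N, Measurable (G N))
    (hD : ∀ N, ∀ p ∈ B ×ˢ Set.Icc C₀ C₁, 1 ≤ D N p ∧ D N p ≤ Dbar)
    (hGupper : ∀ N, ∀ p ∈ (Metric.closedBall mtil η' ∩ B) ×ˢ Set.Icc C₀ C₁,
      G N p ≤ γ₁)
    (hGpos : ∀ N, ∀ p ∈ B ×ˢ Set.Icc C₀ C₁, 0 < G N p)
    (hgoodpos : 0 < volume (Metric.closedBall mtil η' ∩ B))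
    (hGlower : ∀ N, ∀ p ∈ ((B \ Metric.ball mtil η) ×ˢ Set.Icc C₀ C₁),
      γ₂ ≤ G N p)
    (I : ℕ → ℝ)
    (ρ : ℕ → EuclideanSpace ℝ (Fin 3) × ℝ → ℝ)
    (hρ : ∀ N p, ρ N p =
      I N * (D N p) ^ (-(1 : ℝ) / 2) * (G N p) ^ (-(3 * (M N : ℝ) / 2)))
    (hnorm : ∀ N, ∫ p in B ×ˢ Set.Icc C₀ C₁, ρ N p = 1) :
    (∃ K : ℝ, ∀ N,
      ∫ p in (B \ Metric.ball mtil η) ×ˢ Set.Icc C₀ C₁, ρ N p ≤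
        K * (γ₁ / γ₂) ^ (3 * (M N : ℝ) / 2)) ∧
    Tendsto (fun N => ∫ p in (B \ Metric.ball mtil η) ×ˢ Set.Icc C₀ C₁, ρ N p)
      atTop (nhds 0) := by
  have hγ₂ : 0 < γ₂ := hγ₁.trans hγ
  set S : Set (EuclideanSpace ℝ (Fin 3) × ℝ) := B ×ˢ Set.Icc C₀ C₁ with hSdef
  set Good : Set (EuclideanSpace ℝ (Fin 3) × ℝ) :=
    (Metric.closedBall mtil η' ∩ B) ×ˢ Set.Icc C₀ C₁ with hGooddef
  set Bad : Set (EuclideanSpace ℝ (Fin 3) × ℝ) :=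
    (B \ Metric.ball mtil η) ×ˢ Set.Icc C₀ C₁ with hBaddef
  have hSmeas : MeasurableSet S := hB.measurableSet.prod measurableSet_Icc
  have hGoodmeas : MeasurableSet Good :=
    (measurableSet_closedBall.inter hB.measurableSet).prod measurableSet_Icc
  have hBadmeas : MeasurableSet Bad :=
    (hB.measurableSet.diff measurableSet_ball).prod measurableSet_Icc
  have hGoodSub : Good ⊆ S := Set.prod_mono Set.inter_subset_right le_rfl
  have hBadSub : Bad ⊆ S := Set.prod_mono Set.diff_subset le_rfl
  have hSfin : volume S < ⊤ := (hB.prod isCompact_Icc).measure_lt_top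
  have hGoodvol : 0 < volume Good ∧ volume Good < ⊤ := by
    constructor
    · rw [hGooddef, MeasureTheory.Measure.volume_eq_prod, Measure.prod_prod]
      refine ENNReal.mul_pos hgoodpos.ne' ?_
      rw [Real.volume_Icc]
      exact (ENNReal.ofReal_pos.mpr (sub_pos.mpr hC)).ne'
    · exact lt_of_le_of_lt (measure_mono hGoodSub) hSfin
  set vG : ℝ := (volume Good).toReal with hvGdef
  have hvG : 0 < vG := ENNReal.toReal_pos hGoodvol.1.ne' hGoodvol.2.ne
  set vS : ℝ := (volume S).toReal with hvSdef
  -- abbreviations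
  set a : ℝ := Dbar ^ ((1 : ℝ) / 2) with hadef
  have ha : 0 < a := Real.rpow_pos_of_pos (lt_of_lt_of_le one_pos hDbar) _
  set K : ℝ := vS * a / vG with hKdef
  -- the per-N bound
  have key : ∀ N, 0 ≤ (∫ p in Bad, ρ N p) ∧
      (∫ p in Bad, ρ N p) ≤ K * (γ₁ / γ₂) ^ (3 * (M N : ℝ) / 2) := by
    intro N
    set e : ℝ := 3 * (M N : ℝ) / 2 with hedef
    have he : 0 ≤ e := by positivity
    have hDGpos : ∀ p ∈ S, 0 < (D N p) ^ (-(1 : ℝ) / 2) * (G N p) ^ (-e) := by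
      intro p hp
      have h1 : 0 < D N p := lt_of_lt_of_le one_pos (hD N p hp).1
      exact mul_pos (Real.rpow_pos_of_pos h1 _) (Real.rpow_pos_of_pos (hGpos N p hp) _)
    -- I N > 0
    have hI : 0 < I N := by
      by_contra h
      push_neg at h
      have hle : ∫ p in S, ρ N p ≤ 0 := by
        refine setIntegral_nonpos hSmeas fun p hp => ?_
        rw [hρ N p]
        have := hDGpos p hp
        calc I N * D N p ^ (-(1 : ℝ) / 2) * G N p ^ (-(3 * (M N : ℝ) / 2))
            = I N * (D N p ^ (-(1 : ℝ) / 2) * G N p ^ (-e)) := by rw [hedef]; ring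
          _ ≤ 0 := mul_nonpos_of_nonpos_of_nonneg h this.le
      rw [hnorm N] at hle; linarith
    have hρnonneg : ∀ p ∈ S, 0 ≤ ρ N p := by
      intro p hp
      rw [hρ N p]
      have h1 : 0 < D N p := lt_of_lt_of_le one_pos (hD N p hp).1
      have := hGpos N p hp
      positivity
    -- integrability
    have hint : IntegrableOn (ρ N) S volume := by
      by_contra h
      have := integral_undef h
      rw [hnorm N] at this; norm_num at this
    -- lower bound on good set ⇒ upper bound on I N
    have hbc : 0 < γ₁ ^ e := Real.rpow_pos_of_pos hγ₁ _
    have hcc : 0 < γ₂ ^ e := Real.rpow_pos_of_pos hγ₂ _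
    have hIbound : I N * (a⁻¹ * (γ₁ ^ e)⁻¹) * vG ≤ 1 := by
      have hlow : ∀ p ∈ Good, I N * (a⁻¹ * (γ₁ ^ e)⁻¹) ≤ ρ N p := by
        intro p hp
        have hpS : p ∈ S := hGoodSub hp
        have hD1 : 0 < D N p := lt_of_lt_of_le one_pos (hD N p hpS).1
        have hda : a⁻¹ ≤ D N p ^ (-(1 : ℝ) / 2) := by
          rw [hadef, ← Real.rpow_neg (by linarith : (0:ℝ) ≤ Dbar),
            show -((1:ℝ)/2) = -(1:ℝ)/2 by norm_num]
          exact Real.rpow_le_rpow_of_nonpos hD1 (hD N p hpS).2 (by norm_num)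
        have hgb : (γ₁ ^ e)⁻¹ ≤ G N p ^ (-e) := by
          have : γ₁ ^ (-e) ≤ G N p ^ (-e) :=
            Real.rpow_le_rpow_of_nonpos (hGpos N p hpS) (hGupper N p hp) (by linarith)
          rwa [Real.rpow_neg hγ₁.le] at this
        rw [hρ N p]
        have hGp := Real.rpow_pos_of_pos (hGpos N p hpS) (-e)
        have hDp := Real.rpow_pos_of_pos hD1 (-(1:ℝ)/2)
        calc I N * (a⁻¹ * (γ₁ ^ e)⁻¹)
            ≤ I N * (D N p ^ (-(1:ℝ)/2) * G N p ^ (-e)) := by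
              refine mul_le_mul_of_nonneg_left ?_ hI.le
              exact mul_le_mul hda hgb (by positivity) hDp.le
          _ = I N * D N p ^ (-(1 : ℝ) / 2) * G N p ^ (-(3 * (M N : ℝ) / 2)) := by
              rw [hedef]; ring
      have h1 : ∫ _p in Good, (I N * (a⁻¹ * (γ₁ ^ e)⁻¹)) ≤ ∫ p in Good, ρ N p := by
        refine setIntegral_mono_on ?_ (hint.mono_set hGoodSub) hGoodmeas hlow
        exact integrableOn_const hGoodvol.2.ne
      have h2 : ∫ p in Good, ρ N p ≤ ∫ p in S, ρ N p := by
        refine setIntegral_mono_set hint ?_ (HasSubset.Subset.eventuallyLE hGoodSub)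
        exact (ae_restrict_iff' hSmeas).2 (Filter.Eventually.of_forall hρnonneg)
      rw [setIntegral_const, smul_eq_mul, hnorm N] at *
      calc I N * (a⁻¹ * (γ₁ ^ e)⁻¹) * vG = vG * (I N * (a⁻¹ * (γ₁ ^ e)⁻¹)) := by ring
        _ ≤ 1 := le_trans h1 h2
    have hIle : I N ≤ a * γ₁ ^ e / vG := by
      have hpos : (0:ℝ) < a * γ₁ ^ e / vG := by positivity
      have heq : (I N * (a⁻¹ * (γ₁ ^ e)⁻¹) * vG) * (a * γ₁ ^ e / vG) = I N := by
        field_simp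
      calc I N = (I N * (a⁻¹ * (γ₁ ^ e)⁻¹) * vG) * (a * γ₁ ^ e / vG) := heq.symm
        _ ≤ 1 * (a * γ₁ ^ e / vG) := mul_le_mul_of_nonneg_right hIbound hpos.le
        _ = a * γ₁ ^ e / vG := one_mul _
    -- upper bound on bad set
    have hup : ∀ p ∈ Bad, ρ N p ≤ I N * (γ₂ ^ e)⁻¹ := by
      intro p hp
      have hpS : p ∈ S := hBadSub hp
      have hD1 : 1 ≤ D N p := (hD N p hpS).1
      have hd : D N p ^ (-(1:ℝ)/2) ≤ 1 :=
        Real.rpow_le_one_of_one_le_of_nonpos hD1 (by norm_num)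
      have hg : G N p ^ (-e) ≤ (γ₂ ^ e)⁻¹ := by
        have : G N p ^ (-e) ≤ γ₂ ^ (-e) :=
          Real.rpow_le_rpow_of_nonpos hγ₂ (hGlower N p hp) (by linarith)
        rwa [Real.rpow_neg hγ₂.le] at this
      rw [hρ N p]
      have hGp := Real.rpow_pos_of_pos (hGpos N p hpS) (-(3 * (M N : ℝ) / 2))
      have hDp := Real.rpow_pos_of_pos (lt_of_lt_of_le one_pos hD1) (-(1:ℝ)/2)
      calc I N * D N p ^ (-(1 : ℝ) / 2) * G N p ^ (-(3 * (M N : ℝ) / 2))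
          ≤ I N * 1 * G N p ^ (-(3 * (M N : ℝ) / 2)) := by
            refine mul_le_mul_of_nonneg_right (mul_le_mul_of_nonneg_left hd hI.le) hGp.le
        _ = I N * G N p ^ (-e) := by rw [hedef]; ring
        _ ≤ I N * (γ₂ ^ e)⁻¹ := mul_le_mul_of_nonneg_left hg hI.le
    have hBadnonneg : 0 ≤ ∫ p in Bad, ρ N p :=
      setIntegral_nonneg hBadmeas fun p hp => hρnonneg p (hBadSub hp)
    refine ⟨hBadnonneg, ?_⟩
    have h3 : ∫ p in Bad, ρ N p ≤ (volume Bad).toReal * (I N * (γ₂ ^ e)⁻¹) := by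
      have := setIntegral_mono_on (hint.mono_set hBadSub)
        (integrableOn_const (lt_of_le_of_lt (measure_mono hBadSub) hSfin).ne)
        hBadmeas hup
      rwa [setIntegral_const, smul_eq_mul] at this
    have hvBad : (volume Bad).toReal ≤ vS := by
      apply ENNReal.toReal_mono hSfin.ne (measure_mono hBadSub)
    have hratios : K * (γ₁ / γ₂) ^ e = vS * (a * γ₁ ^ e / vG) * (γ₂ ^ e)⁻¹ := by
      rw [hKdef, Real.div_rpow hγ₁.le hγ₂.le]
      field_simp
    rw [hratios]
    have hIpos : 0 < I N * (γ₂ ^ e)⁻¹ := mul_pos hI (inv_pos.mpr hcc)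
    calc ∫ p in Bad, ρ N p ≤ (volume Bad).toReal * (I N * (γ₂ ^ e)⁻¹) := h3
      _ ≤ vS * (I N * (γ₂ ^ e)⁻¹) := mul_le_mul_of_nonneg_right hvBad hIpos.le
      _ ≤ vS * ((a * γ₁ ^ e / vG) * (γ₂ ^ e)⁻¹) := by
          refine mul_le_mul_of_nonneg_left ?_ (ENNReal.toReal_nonneg)
          exact mul_le_mul_of_nonneg_right hIle (inv_pos.mpr hcc).le
      _ = vS * (a * γ₁ ^ e / vG) * (γ₂ ^ e)⁻¹ := by ring
  refine ⟨⟨K, fun N => (key N).2⟩, ?_⟩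
  have hr0 : (0:ℝ) < γ₁ / γ₂ := div_pos hγ₁ hγ₂
  have hr1 : γ₁ / γ₂ < 1 := (div_lt_one hγ₂).mpr hγ
  have hexp : Tendsto (fun N => 3 * (M N : ℝ) / 2) atTop atTop := by
    have h1 : Tendsto (fun N => (M N : ℝ)) atTop atTop :=
      tendsto_natCast_atTop_atTop.comp hM
    exact (h1.const_mul_atTop (by norm_num : (0:ℝ) < 3)).atTop_div_const (by norm_num)
  have hpow : Tendsto (fun N => (γ₁ / γ₂) ^ (3 * (M N : ℝ) / 2)) atTop (nhds 0) :=
    (tendsto_rpow_atTop_of_base_lt_one _ (by linarith) hr1).comp hexp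
  have hKpow : Tendsto (fun N => K * (γ₁ / γ₂) ^ (3 * (M N : ℝ) / 2)) atTop (nhds 0) := by
    simpa using hpow.const_mul K
  exact squeeze_zero (fun N => (key N).1) (fun N => (key N).2) hKpow
end
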